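/- For every real number C with C ∈ (−1, 1) ∪ (1, ∞), the level set L_C = {(ξ,η,ζ) ∈ ℝ³ : ξ² + η² = 1 and ½ζ² + 2ξη = C} is nonempty, compact, and has exactly two connected components. -/

import Mathlib

open Real Set

/-- Every point on the unit circle is `(cos θ, sin θ)` for some `θ`. -/
lemma exists_cos_sin (x y : ℝ) (h : x ^ 2 + y ^ 2 = 1) :
    ∃ θ : ℝ, Real.cos θ = x ∧ Real.sin θ = y := by
  have hx1 : -1 ≤ x := by nlinarith [sq_nonneg y]
  have hx2 : x ≤ 1 := by nlinarith [sq_nonneg y]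
  rcases le_or_gt 0 y with hy | hy
  · refine ⟨Real.arccos x, Real.cos_arccos hx1 hx2, ?_⟩
    rw [Real.sin_arccos]
    have h1 : 1 - x ^ 2 = y ^ 2 := by linarith
    rw [h1, Real.sqrt_sq hy]
  · refine ⟨-Real.arccos x, ?_, ?_⟩
    · rw [Real.cos_neg]; exact Real.cos_arccos hx1 hx2
    · rw [Real.sin_neg, Real.sin_arccos]
      have h1 : 1 - x ^ 2 = y ^ 2 := by linarith
      rw [h1, Real.sqrt_sq_eq_abs, abs_of_neg hy, neg_neg]

/-- If a space is the union of two nonempty disjoint open preconnected sets, it has exactly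
two connected components. -/
lemma two_components_of_clopen {X : Type*} [TopologicalSpace X] {A : Set X}
    (hAo : IsOpen A) (hAco : IsOpen Aᶜ)
    (hAc : IsPreconnected A) (hBc : IsPreconnected Aᶜ)
    (hAne : A.Nonempty) (hBne : Aᶜ.Nonempty) :
    Nat.card (ConnectedComponents X) = 2 := by
  classical
  set f : X → Bool := fun x => if x ∈ A then true else false with hf
  have hfA : ∀ x, f x = true ↔ x ∈ A := by
    intro x; by_cases h : x ∈ A <;> simp [hf, h]
  have hfB : ∀ x, f x = false ↔ x ∈ Aᶜ := by
    intro x; by_cases h : x ∈ A <;> simp [hf, h]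
  have hcont : Continuous f := by
    apply IsLocallyConstant.continuous
    intro s
    by_cases ht : true ∈ s <;> by_cases hfs : false ∈ s
    · have : f ⁻¹' s = Set.univ := by
        ext x; simp only [Set.mem_preimage, Set.mem_univ, iff_true]
        cases hx : f x
        · exact hfs
        · exact ht
      rw [this]; exact isOpen_univ
    · have : f ⁻¹' s = A := by
        ext x; simp only [Set.mem_preimage]
        constructor
        · intro h
          cases hx : f x
          · rw [hx] at h; exact absurd h hfs
          · exact (hfA x).1 hx
        · intro h; rw [(hfA x).2 h]; exact ht
      rw [this]; exact hAo
    · have : f ⁻¹' s = Aᶜ := by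
        ext x; simp only [Set.mem_preimage]
        constructor
        · intro h
          cases hx : f x
          · exact (hfB x).1 hx
          · rw [hx] at h; exact absurd h ht
        · intro h; rw [(hfB x).2 h]; exact hfs
      rw [this]; exact hAco
    · have : f ⁻¹' s = ∅ := by
        ext x; simp only [Set.mem_preimage, Set.mem_empty_iff_false, iff_false]
        intro h
        cases hx : f x
        · rw [hx] at h; exact hfs h
        · rw [hx] at h; exact ht h
      rw [this]; exact isOpen_empty
  have hbij : Function.Bijective hcont.connectedComponentsLift := by
    constructor
    · intro a b hab
      obtain ⟨x, rfl⟩ := ConnectedComponents.surjective_coe a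
      obtain ⟨y, rfl⟩ := ConnectedComponents.surjective_coe b
      rw [Continuous.connectedComponentsLift_apply_coe,
        Continuous.connectedComponentsLift_apply_coe] at hab
      rw [ConnectedComponents.coe_eq_coe]
      by_cases hx : x ∈ A
      · have hy : y ∈ A := by
          rw [← hfA] at hx ⊢; rw [← hab]; exact hx
        exact connectedComponent_eq (hAc.subset_connectedComponent hx hy)
      · have hy : y ∉ A := by
          rw [← hfA] at hx ⊢; rw [← hab]; exact hx
        exact connectedComponent_eq (hBc.subset_connectedComponent hx hy)
    · intro b
      cases b
      · obtain ⟨x, hx⟩ := hBne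
        exact ⟨ConnectedComponents.mk x, by
          rw [Continuous.connectedComponentsLift_apply_coe]; exact (hfB x).2 hx⟩
      · obtain ⟨x, hx⟩ := hAne
        exact ⟨ConnectedComponents.mk x, by
          rw [Continuous.connectedComponentsLift_apply_coe]; exact (hfA x).2 hx⟩
  rw [Nat.card_eq_of_bijective _ hbij]
  simp [Nat.card_eq_fintype_card]

/-- The level set. -/
def Lset (C : ℝ) : Set (ℝ × ℝ × ℝ) :=
  {p : ℝ × ℝ × ℝ | p.1 ^ 2 + p.2.1 ^ 2 = 1 ∧ (1 / 2) * p.2.2 ^ 2 + 2 * p.1 * p.2.1 = C}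

/-- Parametrization of the two pieces when `C > 1`. -/
lemma Ioi_piece (C : ℝ) (hC : 1 < C) (s : ℝ) (hs : s = 1 ∨ s = -1) :
    Lset C ∩ {p : ℝ × ℝ × ℝ | 0 < s * p.2.2} =
      Set.range (fun θ : ℝ =>
        (Real.cos θ, Real.sin θ, s * Real.sqrt (2 * C - 4 * Real.cos θ * Real.sin θ))) := by
  have hs2 : s ^ 2 = 1 := by rcases hs with rfl | rfl <;> norm_num
  ext p
  constructor
  · rintro ⟨⟨h1, h2⟩, hz⟩
    obtain ⟨x, y, z⟩ := p
    simp only [Set.mem_setOf_eq] at h1 h2 hz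
    obtain ⟨θ, hcθ, hsθ⟩ := exists_cos_sin x y h1
    have habs : |z| = s * z := by
      rcases hs with rfl | rfl
      · rw [one_mul] at hz ⊢; exact abs_of_pos hz
      · have hzneg : z < 0 := by nlinarith
        rw [abs_of_neg hzneg]; ring
    refine ⟨θ, ?_⟩
    simp only [Prod.mk.injEq]
    refine ⟨hcθ, hsθ, ?_⟩
    rw [hcθ, hsθ]
    have hz2 : 2 * C - 4 * x * y = z ^ 2 := by linarith
    rw [hz2, Real.sqrt_sq_eq_abs, habs]
    rcases hs with rfl | rfl <;> ring
  · rintro ⟨θ, rfl⟩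
    have hpos : 0 < 2 * C - 4 * Real.cos θ * Real.sin θ := by
      nlinarith [Real.sin_sq_add_cos_sq θ, sq_nonneg (Real.cos θ - Real.sin θ)]
    have hsq : Real.sqrt (2 * C - 4 * Real.cos θ * Real.sin θ) ^ 2 =
        2 * C - 4 * Real.cos θ * Real.sin θ := Real.sq_sqrt hpos.le
    have hw0 : 0 < Real.sqrt (2 * C - 4 * Real.cos θ * Real.sin θ) := Real.sqrt_pos.2 hpos
    refine ⟨⟨?_, ?_⟩, ?_⟩
    · show Real.cos θ ^ 2 + Real.sin θ ^ 2 = 1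
      linarith [Real.sin_sq_add_cos_sq θ]
    · show (1 / 2) * (s * Real.sqrt (2 * C - 4 * Real.cos θ * Real.sin θ)) ^ 2 +
        2 * Real.cos θ * Real.sin θ = C
      have : (s * Real.sqrt (2 * C - 4 * Real.cos θ * Real.sin θ)) ^ 2 =
          2 * C - 4 * Real.cos θ * Real.sin θ := by
        rw [mul_pow, hs2, one_mul, hsq]
      linarith [this]
    · show 0 < s * (s * Real.sqrt (2 * C - 4 * Real.cos θ * Real.sin θ))
      rw [← mul_assoc]
      have hss : s * s = 1 := by rcases hs with rfl | rfl <;> norm_num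
      rw [hss, one_mul]
      exact hw0

/-- Parametrization of the two pieces when `-1 < C < 1`. -/
lemma Ioo_piece (C : ℝ) (hC1 : -1 < C) (hC2 : C < 1) (s : ℝ) (hs : s = 1 ∨ s = -1) :
    Lset C ∩ {p : ℝ × ℝ × ℝ | 0 < s * (p.1 - p.2.1)} =
      Set.range (fun θ : ℝ =>
        ((Real.sqrt (C + 1) * Real.cos θ + s * Real.sqrt (2 - (C + 1) * Real.cos θ ^ 2)) / 2,
         (Real.sqrt (C + 1) * Real.cos θ - s * Real.sqrt (2 - (C + 1) * Real.cos θ ^ 2)) / 2,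
         Real.sqrt (2 * C + 2) * Real.sin θ)) := by
  have hs2 : s ^ 2 = 1 := by rcases hs with rfl | rfl <;> norm_num
  have hC1' : (0:ℝ) < C + 1 := by linarith
  have ha2 : Real.sqrt (C + 1) ^ 2 = C + 1 := Real.sq_sqrt hC1'.le
  have hb2 : Real.sqrt (2 * C + 2) ^ 2 = 2 * C + 2 := Real.sq_sqrt (by linarith)
  have ha0 : (0:ℝ) < Real.sqrt (C + 1) := Real.sqrt_pos.2 hC1'
  have hb0 : (0:ℝ) < Real.sqrt (2 * C + 2) := Real.sqrt_pos.2 (by linarith)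
  ext p
  constructor
  · rintro ⟨⟨h1, h2⟩, hxy⟩
    obtain ⟨x, y, z⟩ := p
    simp only [Set.mem_setOf_eq] at h1 h2 hxy
    have hsum : 2 * (x + y) ^ 2 + z ^ 2 = 2 * C + 2 := by linear_combination 2 * h1 + 2 * h2
    have hcircle : ((x + y) / Real.sqrt (C + 1)) ^ 2 +
        (z / Real.sqrt (2 * C + 2)) ^ 2 = 1 := by
      have h10 : C + 1 ≠ 0 := by linarith
      have h20 : 2 * C + 2 ≠ 0 := by linarith
      rw [div_pow, div_pow, ha2, hb2]
      field_simp
      linear_combination hsum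
    obtain ⟨θ, hcθ, hsθ⟩ := exists_cos_sin _ _ hcircle
    have hac : Real.sqrt (C + 1) * Real.cos θ = x + y := by rw [hcθ]; field_simp
    have hbs : Real.sqrt (2 * C + 2) * Real.sin θ = z := by rw [hsθ]; field_simp
    have hcos2 : (C + 1) * Real.cos θ ^ 2 = (x + y) ^ 2 := by
      have h' : (Real.sqrt (C + 1) * Real.cos θ) ^ 2 = (x + y) ^ 2 := by rw [hac]
      rw [mul_pow, ha2] at h'
      exact h'
    have hw : 2 - (C + 1) * Real.cos θ ^ 2 = (x - y) ^ 2 := by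
      rw [hcos2]; linear_combination (-2 : ℝ) * h1
    have habs : |x - y| = s * (x - y) := by
      rcases hs with rfl | rfl
      · rw [one_mul] at hxy ⊢; exact abs_of_pos hxy
      · have : x - y < 0 := by nlinarith
        rw [abs_of_neg this]; ring
    have hwval : s * Real.sqrt (2 - (C + 1) * Real.cos θ ^ 2) = x - y := by
      rw [hw, Real.sqrt_sq_eq_abs, habs]
      rcases hs with rfl | rfl <;> ring
    refine ⟨θ, ?_⟩
    simp only [Prod.mk.injEq]
    exact ⟨by rw [hac, hwval]; ring, by rw [hac, hwval]; ring, hbs⟩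
  · rintro ⟨θ, rfl⟩
    have hsc : Real.sin θ ^ 2 + Real.cos θ ^ 2 = 1 := Real.sin_sq_add_cos_sq θ
    have hwnn : (0:ℝ) < 2 - (C + 1) * Real.cos θ ^ 2 := by
      nlinarith [sq_nonneg (Real.sin θ)]
    have hw2 : Real.sqrt (2 - (C + 1) * Real.cos θ ^ 2) ^ 2 =
        2 - (C + 1) * Real.cos θ ^ 2 := Real.sq_sqrt hwnn.le
    have hw0 : (0:ℝ) < Real.sqrt (2 - (C + 1) * Real.cos θ ^ 2) := Real.sqrt_pos.2 hwnn
    have hu2 : (Real.sqrt (C + 1) * Real.cos θ) ^ 2 = (C + 1) * Real.cos θ ^ 2 := by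
      rw [mul_pow, ha2]
    have hz2 : (Real.sqrt (2 * C + 2) * Real.sin θ) ^ 2 = (2 * C + 2) * Real.sin θ ^ 2 := by
      rw [mul_pow, hb2]
    have hsw2 : (s * Real.sqrt (2 - (C + 1) * Real.cos θ ^ 2)) ^ 2 =
        2 - (C + 1) * Real.cos θ ^ 2 := by
      rw [mul_pow, hs2, one_mul, hw2]
    refine ⟨⟨?_, ?_⟩, ?_⟩
    · show ((Real.sqrt (C + 1) * Real.cos θ +
          s * Real.sqrt (2 - (C + 1) * Real.cos θ ^ 2)) / 2) ^ 2 +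
        ((Real.sqrt (C + 1) * Real.cos θ -
          s * Real.sqrt (2 - (C + 1) * Real.cos θ ^ 2)) / 2) ^ 2 = 1
      linear_combination (1 / 2 : ℝ) * hu2 + (1 / 2 : ℝ) * hsw2
    · show (1 / 2) * (Real.sqrt (2 * C + 2) * Real.sin θ) ^ 2 +
        2 * ((Real.sqrt (C + 1) * Real.cos θ +
          s * Real.sqrt (2 - (C + 1) * Real.cos θ ^ 2)) / 2) *
          ((Real.sqrt (C + 1) * Real.cos θ -
          s * Real.sqrt (2 - (C + 1) * Real.cos θ ^ 2)) / 2) = C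
      linear_combination (1 / 2 : ℝ) * hz2 + (1 / 2 : ℝ) * hu2 - (1 / 2 : ℝ) * hsw2 +
        (C + 1) * hsc
    · show 0 < s * ((Real.sqrt (C + 1) * Real.cos θ +
          s * Real.sqrt (2 - (C + 1) * Real.cos θ ^ 2)) / 2 -
        (Real.sqrt (C + 1) * Real.cos θ -
          s * Real.sqrt (2 - (C + 1) * Real.cos θ ^ 2)) / 2)
      have hd : (Real.sqrt (C + 1) * Real.cos θ +
          s * Real.sqrt (2 - (C + 1) * Real.cos θ ^ 2)) / 2 -
        (Real.sqrt (C + 1) * Real.cos θ -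
          s * Real.sqrt (2 - (C + 1) * Real.cos θ ^ 2)) / 2 =
          s * Real.sqrt (2 - (C + 1) * Real.cos θ ^ 2) := by ring
      rw [hd, ← mul_assoc]
      have hss : s * s = 1 := by rcases hs with rfl | rfl <;> norm_num
      rw [hss, one_mul]
      exact hw0

theorem casimir_level_two_components (C : ℝ)
    (hC : C ∈ Set.Ioo (-1 : ℝ) 1 ∪ Set.Ioi (1 : ℝ)) :
    (({p : ℝ × ℝ × ℝ | p.1 ^ 2 + p.2.1 ^ 2 = 1 ∧
        (1 / 2) * p.2.2 ^ 2 + 2 * p.1 * p.2.1 = C} : Set (ℝ × ℝ × ℝ)).Nonempty) ∧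
    IsCompact ({p : ℝ × ℝ × ℝ | p.1 ^ 2 + p.2.1 ^ 2 = 1 ∧
        (1 / 2) * p.2.2 ^ 2 + 2 * p.1 * p.2.1 = C} : Set (ℝ × ℝ × ℝ)) ∧
    Nat.card (ConnectedComponents
      ({p : ℝ × ℝ × ℝ | p.1 ^ 2 + p.2.1 ^ 2 = 1 ∧
        (1 / 2) * p.2.2 ^ 2 + 2 * p.1 * p.2.1 = C} : Set (ℝ × ℝ × ℝ))) = 2 := by
  have hL : ({p : ℝ × ℝ × ℝ | p.1 ^ 2 + p.2.1 ^ 2 = 1 ∧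
      (1 / 2) * p.2.2 ^ 2 + 2 * p.1 * p.2.1 = C} : Set (ℝ × ℝ × ℝ)) = Lset C := rfl
  rw [hL]
  have hC1 : (-1 : ℝ) < C := by
    rcases hC with h | h
    · exact h.1
    · linarith [Set.mem_Ioi.1 h]
  have h2 : (Real.sqrt 2) ^ 2 = 2 := Real.sq_sqrt (by norm_num)
  have hz2 : (Real.sqrt (2 * C + 2)) ^ 2 = 2 * C + 2 := Real.sq_sqrt (by linarith)
  refine ⟨⟨(Real.sqrt 2 / 2, -(Real.sqrt 2 / 2), Real.sqrt (2 * C + 2)), ?_, ?_⟩, ?_, ?_⟩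
  · show (Real.sqrt 2 / 2) ^ 2 + (-(Real.sqrt 2 / 2)) ^ 2 = 1
    nlinarith [h2]
  · show (1 / 2) * (Real.sqrt (2 * C + 2)) ^ 2 +
      2 * (Real.sqrt 2 / 2) * (-(Real.sqrt 2 / 2)) = C
    nlinarith [h2, hz2]
  · -- compactness
    have hclosed : IsClosed (Lset C) := by
      have : Lset C = (fun p : ℝ × ℝ × ℝ => p.1 ^ 2 + p.2.1 ^ 2) ⁻¹' {1} ∩
          (fun p : ℝ × ℝ × ℝ => (1 / 2) * p.2.2 ^ 2 + 2 * p.1 * p.2.1) ⁻¹' {C} := by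
        ext p; simp [Lset]
      rw [this]
      exact (isClosed_singleton.preimage (by fun_prop)).inter
        (isClosed_singleton.preimage (by fun_prop))
    have hbox : IsCompact ((Set.Icc (-1:ℝ) 1) ×ˢ ((Set.Icc (-1:ℝ) 1) ×ˢ
        (Set.Icc (-(2*C+3)) (2*C+3)))) :=
      isCompact_Icc.prod (isCompact_Icc.prod isCompact_Icc)
    refine hbox.of_isClosed_subset hclosed ?_
    rintro ⟨x, y, z⟩ ⟨h1, hh2⟩
    simp only [Set.mem_setOf_eq] at h1 hh2
    have hzsq : z ^ 2 ≤ 2 * C + 2 := by nlinarith [sq_nonneg (x + y)]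
    refine ⟨⟨by nlinarith [sq_nonneg y], by nlinarith [sq_nonneg y]⟩,
      ⟨by nlinarith [sq_nonneg x], by nlinarith [sq_nonneg x]⟩,
      ⟨by nlinarith [sq_nonneg (z + (2*C+3))], by nlinarith [sq_nonneg (z - (2*C+3))]⟩⟩
  · -- two connected components
    rcases hC with hCo | hCi
    · -- case -1 < C < 1 : pieces x - y > 0 and x - y < 0
      obtain ⟨hC1', hC2⟩ := hCo
      have hne : ∀ p ∈ Lset C, p.1 ≠ p.2.1 := by
        rintro ⟨x, y, z⟩ ⟨h1, hh2⟩ heq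
        simp only at heq h1 hh2
        rw [heq] at h1 hh2
        nlinarith [sq_nonneg z]
      set A : Set (Lset C) := Subtype.val ⁻¹' {p : ℝ × ℝ × ℝ | 0 < (1:ℝ) * (p.1 - p.2.1)}
        with hAdef
      have hopen : ∀ s : ℝ, IsOpen {p : ℝ × ℝ × ℝ | 0 < s * (p.1 - p.2.1)} := fun s =>
        isOpen_lt continuous_const (by fun_prop)
      have hAo : IsOpen A := (hopen 1).preimage continuous_subtype_val
      have hAcompl : Aᶜ = Subtype.val ⁻¹' {p : ℝ × ℝ × ℝ | 0 < (-1:ℝ) * (p.1 - p.2.1)} := by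
        ext q
        have hq := hne q.1 q.2
        simp only [hAdef, Set.mem_compl_iff, Set.mem_preimage, Set.mem_setOf_eq, one_mul,
          not_lt, neg_mul, neg_sub]
        constructor
        · intro h
          rcases lt_or_eq_of_le h with h' | h'
          · linarith
          · exact absurd h' (sub_ne_zero.2 hq)
        · intro h; linarith
      have hAco : IsOpen Aᶜ := by
        rw [hAcompl]; exact (hopen (-1)).preimage continuous_subtype_val
      have hpre : ∀ s : ℝ, s = 1 ∨ s = -1 → IsPreconnected
          (Subtype.val ⁻¹' {p : ℝ × ℝ × ℝ | 0 < s * (p.1 - p.2.1)} : Set (Lset C)) := by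
        intro s hs
        rw [← Topology.IsInducing.subtypeVal.isPreconnected_image]
        rw [Subtype.image_preimage_coe]
        rw [Ioo_piece C hC1' hC2 s hs]
        exact isPreconnected_range (by fun_prop)
      have hAc : IsPreconnected A := hpre 1 (Or.inl rfl)
      have hBc : IsPreconnected Aᶜ := by rw [hAcompl]; exact hpre (-1) (Or.inr rfl)
      have hmem1 : (Real.sqrt 2 / 2, -(Real.sqrt 2 / 2), Real.sqrt (2 * C + 2)) ∈ Lset C := by
        constructor
        · show (Real.sqrt 2 / 2) ^ 2 + (-(Real.sqrt 2 / 2)) ^ 2 = 1; nlinarith [h2]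
        · show (1 / 2) * (Real.sqrt (2 * C + 2)) ^ 2 +
            2 * (Real.sqrt 2 / 2) * (-(Real.sqrt 2 / 2)) = C
          nlinarith [h2, hz2]
      have hmem2 : (-(Real.sqrt 2 / 2), Real.sqrt 2 / 2, Real.sqrt (2 * C + 2)) ∈ Lset C := by
        constructor
        · show (-(Real.sqrt 2 / 2)) ^ 2 + (Real.sqrt 2 / 2) ^ 2 = 1; nlinarith [h2]
        · show (1 / 2) * (Real.sqrt (2 * C + 2)) ^ 2 +
            2 * (-(Real.sqrt 2 / 2)) * (Real.sqrt 2 / 2) = C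
          nlinarith [h2, hz2]
      have hs2pos : (0:ℝ) < Real.sqrt 2 / 2 := by positivity
      have hAne : A.Nonempty := ⟨⟨_, hmem1⟩, by
        simp only [hAdef, Set.mem_preimage, Set.mem_setOf_eq]; linarith⟩
      have hBne : Aᶜ.Nonempty := ⟨⟨_, hmem2⟩, by
        rw [hAcompl]
        simp only [Set.mem_preimage, Set.mem_setOf_eq, neg_mul, neg_sub]; linarith⟩
      exact two_components_of_clopen hAo hAco hAc hBc hAne hBne
    · -- case C > 1 : pieces z > 0 and z < 0
      have hCi' : 1 < C := Set.mem_Ioi.1 hCi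
      have hne : ∀ p ∈ Lset C, p.2.2 ≠ 0 := by
        rintro ⟨x, y, z⟩ ⟨h1, hh2⟩ heq
        simp only at heq h1 hh2
        rw [heq] at hh2
        nlinarith [sq_nonneg (x - y)]
      set A : Set (Lset C) := Subtype.val ⁻¹' {p : ℝ × ℝ × ℝ | 0 < (1:ℝ) * p.2.2} with hAdef
      have hopen : ∀ s : ℝ, IsOpen {p : ℝ × ℝ × ℝ | 0 < s * p.2.2} := fun s =>
        isOpen_lt continuous_const (by fun_prop)
      have hAo : IsOpen A := (hopen 1).preimage continuous_subtype_val
      have hAcompl : Aᶜ = Subtype.val ⁻¹' {p : ℝ × ℝ × ℝ | 0 < (-1:ℝ) * p.2.2} := by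
        ext q
        have hq := hne q.1 q.2
        simp only [hAdef, Set.mem_compl_iff, Set.mem_preimage, Set.mem_setOf_eq, one_mul,
          not_lt, neg_mul]
        constructor
        · intro h
          rcases lt_or_eq_of_le h with h' | h'
          · linarith
          · exact absurd h' hq
        · intro h; linarith
      have hAco : IsOpen Aᶜ := by
        rw [hAcompl]; exact (hopen (-1)).preimage continuous_subtype_val
      have hpre : ∀ s : ℝ, s = 1 ∨ s = -1 → IsPreconnected
          (Subtype.val ⁻¹' {p : ℝ × ℝ × ℝ | 0 < s * p.2.2} : Set (Lset C)) := by
        intro s hs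
        rw [← Topology.IsInducing.subtypeVal.isPreconnected_image]
        rw [Subtype.image_preimage_coe]
        rw [Ioi_piece C hCi' s hs]
        exact isPreconnected_range (by fun_prop)
      have hAc : IsPreconnected A := hpre 1 (Or.inl rfl)
      have hBc : IsPreconnected Aᶜ := by rw [hAcompl]; exact hpre (-1) (Or.inr rfl)
      have hmem1 : (Real.sqrt 2 / 2, -(Real.sqrt 2 / 2), Real.sqrt (2 * C + 2)) ∈ Lset C := by
        constructor
        · show (Real.sqrt 2 / 2) ^ 2 + (-(Real.sqrt 2 / 2)) ^ 2 = 1; nlinarith [h2]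
        · show (1 / 2) * (Real.sqrt (2 * C + 2)) ^ 2 +
            2 * (Real.sqrt 2 / 2) * (-(Real.sqrt 2 / 2)) = C
          nlinarith [h2, hz2]
      have hmem2 : (Real.sqrt 2 / 2, -(Real.sqrt 2 / 2), -Real.sqrt (2 * C + 2)) ∈ Lset C := by
        constructor
        · show (Real.sqrt 2 / 2) ^ 2 + (-(Real.sqrt 2 / 2)) ^ 2 = 1; nlinarith [h2]
        · show (1 / 2) * (-Real.sqrt (2 * C + 2)) ^ 2 +
            2 * (Real.sqrt 2 / 2) * (-(Real.sqrt 2 / 2)) = C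
          nlinarith [h2, hz2]
      have hzpos : (0:ℝ) < Real.sqrt (2 * C + 2) := Real.sqrt_pos.2 (by linarith)
      have hAne : A.Nonempty := ⟨⟨_, hmem1⟩, by
        simp only [hAdef, Set.mem_preimage, Set.mem_setOf_eq]; linarith⟩
      have hBne : Aᶜ.Nonempty := ⟨⟨_, hmem2⟩, by
        rw [hAcompl]
        simp only [Set.mem_preimage, Set.mem_setOf_eq, neg_mul]; linarith⟩
      exact two_components_of_clopen hAo hAco hAc hBc hAne hBne
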